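/- There exists a universal constant C < ∞ such that for every 0 < δ < arsinh(1) and every 0 < ℓ ≤ 2δ, the squared L² norm of the quadratic differential dw² over the δ-thin part of the collar C(ℓ) satisfies |‖dw²‖²_{L²(δ-thin(C(ℓ)))} − 32π⁵·ℓ^{−3}| ≤ C·δ^{−3}, where ‖dw²‖²_{L²(δ-thin(C(ℓ)))} = 8π∫_{−X_δ(ℓ)}^{X_δ(ℓ)} ρ_ℓ(s)^{−2} ds = (32π³/ℓ²)∫_{−X_δ(ℓ)}^{X_δ(ℓ)} cos²(ℓs/(2π)) ds. That is, ‖dw²‖²_{L²(δ-thin(C(ℓ)))} = C₀ℓ^{−3} + O(δ^{−3}) with C₀ = 32π⁵. -/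

import Mathlib

open Real Set MeasureTheory

/-- Conformal factor of the collar metric. -/
noncomputable def collarRho (ℓ s : ℝ) : ℝ :=
  ℓ / (2 * π * Real.cos (ℓ * s / (2 * π)))

/-- Half-length of the `δ`-thin part of the collar. -/
noncomputable def collarXdelta (δ ℓ : ℝ) : ℝ :=
  if Real.sinh (ℓ / 2) ≤ Real.sinh δ then
    (2 * π / ℓ) * (π / 2 - Real.arcsin (Real.sinh (ℓ / 2) / Real.sinh δ))
  else 0

/-- On `[0, arsinh 1]` we have `sinh x ≤ 2x`. -/
lemma sinh_le_two_mul {x : ℝ} (hx0 : 0 ≤ x) (hx1 : x ≤ Real.arsinh 1) :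
    Real.sinh x ≤ 2 * x := by
  have hmono : MonotoneOn (fun x : ℝ => 2 * x - Real.sinh x) (Icc 0 (Real.arsinh 1)) := by
    have hderiv : ∀ y : ℝ, HasDerivAt (fun x : ℝ => 2 * x - Real.sinh x)
        (2 - Real.cosh y) y := by
      intro y
      have h1 : HasDerivAt (fun x : ℝ => 2 * x) 2 y := by
        simpa using (hasDerivAt_id y).const_mul (2 : ℝ)
      exact h1.sub (Real.hasDerivAt_sinh y)
    apply monotoneOn_of_deriv_nonneg (convex_Icc _ _)
    · exact fun y _ => ((hderiv y).continuousAt).continuousWithinAt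
    · exact fun y _ => ((hderiv y).differentiableAt).differentiableWithinAt
    · intro y hy
      rw [interior_Icc] at hy
      rw [(hderiv y).deriv]
      have hc : Real.cosh y ≤ Real.cosh (Real.arsinh 1) := by
        rw [Real.cosh_le_cosh]
        rw [abs_of_nonneg hy.1.le, abs_of_nonneg (Real.arsinh_nonneg_iff.mpr zero_le_one)]
        exact hy.2.le
      have h2 : Real.cosh (Real.arsinh 1) ≤ 2 := by
        rw [Real.cosh_arsinh]
        rw [show (1:ℝ) + 1 ^ 2 = 2 by norm_num]
        nlinarith [Real.sq_sqrt (by norm_num : (2:ℝ) ≥ 0), Real.sqrt_nonneg (2:ℝ)]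
      linarith
  have h0 : (0:ℝ) ∈ Icc (0:ℝ) (Real.arsinh 1) := ⟨le_refl _, Real.arsinh_nonneg_iff.mpr zero_le_one⟩
  have hx : x ∈ Icc (0:ℝ) (Real.arsinh 1) := ⟨hx0, hx1⟩
  have := hmono h0 hx hx0
  simp only [Real.sinh_zero, mul_zero, sub_zero] at this
  linarith

/-- The key cubic bound: `arcsin u - u √(1-u²) ≤ 4 π u³` for `u ∈ [0,1]`. -/
lemma arcsin_sub_le_cube {u : ℝ} (hu0 : 0 ≤ u) (hu1 : u ≤ 1) :
    Real.arcsin u - u * Real.sqrt (1 - u ^ 2) ≤ 4 * π * u ^ 3 := by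
  rcases le_or_gt u (1/2) with hu | hu
  · -- small u : monotonicity of 3u³ + u√(1-u²) - arcsin u on [0,1/2]
    have hmono : MonotoneOn
        (fun u : ℝ => 3 * u ^ 3 + u * Real.sqrt (1 - u ^ 2) - Real.arcsin u)
        (Icc 0 (1/2 : ℝ)) := by
      have hderiv : ∀ y ∈ Ioo (0:ℝ) (1/2 : ℝ),
          HasDerivAt (fun u : ℝ => 3 * u ^ 3 + u * Real.sqrt (1 - u ^ 2) - Real.arcsin u)
            (3 * (3 * y ^ 2) + (1 * Real.sqrt (1 - y ^ 2) +
              y * (1 / (2 * Real.sqrt (1 - y ^ 2)) * (0 - 2 * y ^ 1))) -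
              1 / Real.sqrt (1 - y ^ 2)) y := by
        intro y hy
        have hy2 : (1 : ℝ) - y ^ 2 ≠ 0 := by nlinarith [hy.1, hy.2]
        have hinner : HasDerivAt (fun u : ℝ => 1 - u ^ 2) (0 - 2 * y ^ 1) y :=
          (hasDerivAt_const y (1:ℝ)).sub (hasDerivAt_pow 2 y)
        have hsq : HasDerivAt (fun u : ℝ => Real.sqrt (1 - u ^ 2))
            (1 / (2 * Real.sqrt (1 - y ^ 2)) * (0 - 2 * y ^ 1)) y :=
          (Real.hasDerivAt_sqrt hy2).comp y hinner
        have hcube : HasDerivAt (fun u : ℝ => 3 * u ^ 3) (3 * (3 * y ^ 2)) y := by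
          simpa using (hasDerivAt_pow 3 y).const_mul (3:ℝ)
        have hprod : HasDerivAt (fun u : ℝ => u * Real.sqrt (1 - u ^ 2))
            (1 * Real.sqrt (1 - y ^ 2) +
              y * (1 / (2 * Real.sqrt (1 - y ^ 2)) * (0 - 2 * y ^ 1))) y :=
          (hasDerivAt_id y).mul hsq
        have harc : HasDerivAt Real.arcsin (1 / Real.sqrt (1 - y ^ 2)) y :=
          Real.hasDerivAt_arcsin (by nlinarith [hy.1]) (by nlinarith [hy.2])
        exact (hcube.add hprod).sub harc
      apply monotoneOn_of_deriv_nonneg (convex_Icc _ _)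
      · apply ContinuousOn.sub
        · exact (continuousOn_const.mul (continuousOn_pow 3)).add
            (continuousOn_id.mul ((continuousOn_const.sub (continuousOn_pow 2)).sqrt))
        · exact Real.continuous_arcsin.continuousOn
      · intro y hy
        rw [interior_Icc] at hy
        exact ((hderiv y hy).differentiableAt).differentiableWithinAt
      · intro y hy
        rw [interior_Icc] at hy
        rw [((hderiv y hy).deriv)]
        set s := Real.sqrt (1 - y ^ 2) with hs_def
        have hy0 : 0 < y := hy.1
        have hy12 : y < 1/2 := hy.2
        have hs2 : s ^ 2 = 1 - y ^ 2 := Real.sq_sqrt (by nlinarith)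
        have hs_half : (1/2 : ℝ) ≤ s := by
          rw [hs_def]
          rw [show (1/2 : ℝ) = Real.sqrt (1/4) by
            rw [show (1/4 : ℝ) = (1/2)^2 by norm_num, Real.sqrt_sq (by norm_num)]]
          exact Real.sqrt_le_sqrt (by nlinarith)
        have hs_pos : 0 < s := by linarith
        have key : 3 * (3 * y ^ 2) + (1 * s + y * (1 / (2 * s) * (0 - 2 * y ^ 1))) - 1 / s
            = 9 * y ^ 2 - 2 * y ^ 2 / s := by
          field_simp
          nlinarith [hs2]
        rw [key]
        have : 2 * y ^ 2 / s ≤ 4 * y ^ 2 := by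
          rw [div_le_iff₀ hs_pos]; nlinarith
        nlinarith
    have h0 : (0:ℝ) ∈ Icc (0:ℝ) (1/2 : ℝ) := ⟨le_refl _, by norm_num⟩
    have hx : u ∈ Icc (0:ℝ) (1/2 : ℝ) := ⟨hu0, hu⟩
    have h := hmono h0 hx hu0
    simp only [Real.arcsin_zero] at h
    have hpi : (3:ℝ) ≤ 4 * π := by nlinarith [Real.pi_gt_three]
    have hcube : 0 ≤ u ^ 3 := by positivity
    nlinarith [h]
  · -- large u : crude bound using arcsin ≤ π/2
    have h1 : Real.arcsin u ≤ π / 2 := Real.arcsin_le_pi_div_two u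
    have h2 : 0 ≤ u * Real.sqrt (1 - u ^ 2) := by positivity
    have h3 : π / 2 ≤ 4 * π * u ^ 3 := by
      have hc : (1/2 : ℝ) ^ 3 ≤ u ^ 3 := pow_le_pow_left₀ (by norm_num) hu.le 3
      nlinarith [Real.pi_pos]
    linarith

/-- The squared `L²` norm of `dw²` over the `δ`-thin part of the collar `C(ℓ)`,
`‖dw²‖² = 8π ∫_{-X_δ}^{X_δ} ρ_ℓ(s)^{-2} ds = (32π³/ℓ²) ∫_{-X_δ}^{X_δ} cos²(ℓs/(2π)) ds`,
equals `32π⁵ ℓ^{-3} + O(δ^{-3})`. -/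
theorem l2_norm_dw2_thin_part :
    ∃ C : ℝ, 0 < C ∧
      ∀ δ ℓ : ℝ, 0 < δ → δ < Real.arsinh 1 → 0 < ℓ → ℓ ≤ 2 * δ →
        (8 * π * ∫ s in (-(collarXdelta δ ℓ))..(collarXdelta δ ℓ), ((collarRho ℓ s) ^ 2)⁻¹)
          = (32 * π ^ 3 / ℓ ^ 2) *
              ∫ s in (-(collarXdelta δ ℓ))..(collarXdelta δ ℓ),
                Real.cos (ℓ * s / (2 * π)) ^ 2 ∧
        |(8 * π * ∫ s in (-(collarXdelta δ ℓ))..(collarXdelta δ ℓ),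
              ((collarRho ℓ s) ^ 2)⁻¹) - 32 * π ^ 5 / ℓ ^ 3| ≤ C / δ ^ 3 := by
  refine ⟨256 * π ^ 5, by positivity, ?_⟩
  intro δ ℓ hδ hδ1 hℓ hℓδ
  have hπ : 0 < π := Real.pi_pos
  have hℓ2δ : ℓ / 2 ≤ δ := by linarith
  have hsδ : 0 < Real.sinh δ := Real.sinh_pos_iff.mpr hδ
  set u : ℝ := Real.sinh (ℓ / 2) / Real.sinh δ with hu_def
  have hu0 : 0 ≤ u := by
    apply div_nonneg _ hsδ.le
    exact (Real.sinh_nonneg_iff).mpr (by linarith)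
  have hu1 : u ≤ 1 := by
    rw [hu_def, div_le_one hsδ]
    exact Real.sinh_le_sinh.mpr hℓ2δ
  have hX : collarXdelta δ ℓ = (2 * π / ℓ) * (π / 2 - Real.arcsin u) := by
    rw [collarXdelta, if_pos (Real.sinh_le_sinh.mpr hℓ2δ)]
  set X : ℝ := collarXdelta δ ℓ with hX_def
  -- rewrite the integrand
  have hrho : ∀ s : ℝ, ((collarRho ℓ s) ^ 2)⁻¹
      = (4 * π ^ 2 / ℓ ^ 2) * Real.cos (ℓ * s / (2 * π)) ^ 2 := by
    intro s
    rw [collarRho, div_pow, inv_div]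
    ring
  have hEq : (8 * π * ∫ s in (-X)..X, ((collarRho ℓ s) ^ 2)⁻¹)
      = (32 * π ^ 3 / ℓ ^ 2) * ∫ s in (-X)..X, Real.cos (ℓ * s / (2 * π)) ^ 2 := by
    simp only [hrho, intervalIntegral.integral_const_mul]
    ring
  refine ⟨hEq, ?_⟩
  -- compute the cosine-squared integral
  have ha : ℓ / (2 * π) ≠ 0 := by positivity
  have hIcongr : (∫ s in (-X)..X, Real.cos (ℓ * s / (2 * π)) ^ 2)
      = ∫ s in (-X)..X, (fun x : ℝ => Real.cos x ^ 2) (s * (ℓ / (2 * π))) := by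
    apply intervalIntegral.integral_congr
    intro s _
    simp only
    rw [show ℓ * s / (2 * π) = s * (ℓ / (2 * π)) by ring]
  have hXa : X * (ℓ / (2 * π)) = π / 2 - Real.arcsin u := by
    rw [hX]
    field_simp
  set T : ℝ := π / 2 - Real.arcsin u with hT_def
  have hsinT : Real.sin T = Real.sqrt (1 - u ^ 2) := by
    rw [hT_def, Real.sin_pi_div_two_sub, Real.cos_arcsin]
  have hcosT : Real.cos T = u := by
    rw [hT_def, Real.cos_pi_div_two_sub, Real.sin_arcsin (by linarith) hu1]
  have hI : (∫ s in (-X)..X, Real.cos (ℓ * s / (2 * π)) ^ 2)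
      = (2 * π / ℓ) * (u * Real.sqrt (1 - u ^ 2) + T) := by
    rw [hIcongr, intervalIntegral.integral_comp_mul_right (fun x => Real.cos x ^ 2) ha,
      neg_mul, hXa,
      integral_cos_sq, Real.cos_neg, Real.sin_neg, hsinT, hcosT, smul_eq_mul]
    rw [show (ℓ / (2 * π))⁻¹ = 2 * π / ℓ by rw [inv_div]]
    ring
  -- the error term
  have hf0 : 0 ≤ Real.arcsin u - u * Real.sqrt (1 - u ^ 2) := by
    have h1 : u ≤ Real.arcsin u := by
      nth_rewrite 1 [← Real.sin_arcsin (by linarith) hu1]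
      exact Real.sin_le (Real.arcsin_nonneg.mpr hu0)
    have h2 : u * Real.sqrt (1 - u ^ 2) ≤ u := by
      apply mul_le_of_le_one_right hu0
      calc Real.sqrt (1 - u ^ 2) ≤ Real.sqrt 1 := Real.sqrt_le_sqrt (by nlinarith)
        _ = 1 := Real.sqrt_one
    linarith
  have habs : |(8 * π * ∫ s in (-X)..X, ((collarRho ℓ s) ^ 2)⁻¹) - 32 * π ^ 5 / ℓ ^ 3|
      = (64 * π ^ 4 / ℓ ^ 3) * (Real.arcsin u - u * Real.sqrt (1 - u ^ 2)) := by
    rw [hEq, hI]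
    rw [show (32 * π ^ 3 / ℓ ^ 2) * ((2 * π / ℓ) * (u * Real.sqrt (1 - u ^ 2) + T))
        - 32 * π ^ 5 / ℓ ^ 3
        = -((64 * π ^ 4 / ℓ ^ 3) * (Real.arcsin u - u * Real.sqrt (1 - u ^ 2))) by
      rw [hT_def]; field_simp; ring]
    rw [abs_neg, abs_of_nonneg (by positivity)]
  rw [habs]
  -- bound using the cubic estimate and u ≤ ℓ/δ
  have hkey := arcsin_sub_le_cube hu0 hu1
  have huℓδ : u ≤ ℓ / δ := by
    rw [hu_def]
    have h1 : Real.sinh (ℓ / 2) ≤ ℓ := by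
      have := sinh_le_two_mul (by linarith : (0:ℝ) ≤ ℓ / 2) (by linarith)
      linarith
    have h2 : δ ≤ Real.sinh δ := (Real.self_lt_sinh_iff.mpr hδ).le
    exact div_le_div₀ hℓ.le h1 hδ h2
  have hu3 : u ^ 3 ≤ (ℓ / δ) ^ 3 := by
    exact pow_le_pow_left₀ hu0 huℓδ 3
  calc (64 * π ^ 4 / ℓ ^ 3) * (Real.arcsin u - u * Real.sqrt (1 - u ^ 2))
      ≤ (64 * π ^ 4 / ℓ ^ 3) * (4 * π * u ^ 3) := by
        apply mul_le_mul_of_nonneg_left hkey (by positivity)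
    _ ≤ (64 * π ^ 4 / ℓ ^ 3) * (4 * π * (ℓ / δ) ^ 3) := by
        apply mul_le_mul_of_nonneg_left _ (by positivity)
        apply mul_le_mul_of_nonneg_left hu3 (by positivity)
    _ = 256 * π ^ 5 / δ ^ 3 := by
        rw [div_pow]
        field_simp
        ring
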